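/- (Groves mechanisms are dominant-strategy incentive compatible.) Let N be a finite player set and Ω a finite trade set. Let V denote the type of valuation profiles v : N → (Finset Ω → ℝ). Suppose Ψ* : V → Finset Ω satisfies, for every profile v, ∑_{i∈N} v_i(Ψ*(v)) = max_{Ψ⊆Ω} ∑_{i∈N} v_i(Ψ), and suppose h : N → V → ℝ satisfies h_i(v) = h_i(w) whenever v_j = w_j for all j ≠ i. Define the payment from player i to the mechanism by p_i(v) = h_i(v) − ∑_{j∈N, j≠i} v_j(Ψ*(v)). Then for every player i ∈ N, every true valuation v_i : Finset Ω → ℝ, and every reported profile v' : N → (Finset Ω → ℝ), letting v* be the profile that agrees with v' on N \ {i} and reports v_i truthfully at i, one has v_i(Ψ*(v*)) − p_i(v*) ≥ v_i(Ψ*(v')) − p_i(v'). -/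
import Mathlib


/-- Groves mechanisms are dominant-strategy incentive compatible: with an
efficient allocation rule `Ψstar` and payments `p i v = h i v − ∑_{j ≠ i} v j (Ψstar v)`
where `h i` depends only on the reports of players other than `i`, reporting
truthfully maximizes player `i`'s utility regardless of the other reports. -/
theorem groves_mechanism_DSIC
    {N Ω : Type*} [Fintype N] [Fintype Ω] [DecidableEq N]
    (Ψstar : (N → Finset Ω → ℝ) → Finset Ω)
    (hΨ : ∀ v : N → Finset Ω → ℝ,
      ∑ i : N, v i (Ψstar v)
        = (Finset.univ : Finset (Finset Ω)).sup' Finset.univ_nonempty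
            (fun Ψ => ∑ i : N, v i Ψ))
    (h : N → (N → Finset Ω → ℝ) → ℝ)
    (hh : ∀ (i : N) (v w : N → Finset Ω → ℝ),
      (∀ j : N, j ≠ i → v j = w j) → h i v = h i w)
    (p : N → (N → Finset Ω → ℝ) → ℝ)
    (hp : ∀ (i : N) (v : N → Finset Ω → ℝ),
      p i v = h i v - ∑ j ∈ Finset.univ.erase i, v j (Ψstar v))
    (i : N) (vi : Finset Ω → ℝ) (v' : N → Finset Ω → ℝ) :
    vi (Ψstar (Function.update v' i vi)) - p i (Function.update v' i vi)
      ≥ vi (Ψstar v') - p i v' := by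
  set vstar := Function.update v' i vi with hvstar
  have hhs : h i vstar = h i v' := hh i vstar v' (fun j hj => Function.update_of_ne hj _ _)
  have hsum : ∀ S : Finset Ω, ∑ j ∈ Finset.univ.erase i, vstar j S
      = ∑ j ∈ Finset.univ.erase i, v' j S := by
    intro S
    refine Finset.sum_congr rfl (fun j hj => ?_)
    show Function.update v' i vi j S = v' j S
    rw [Function.update_of_ne (Finset.ne_of_mem_erase hj)]
  have hsplit : ∀ (w : N → Finset Ω → ℝ) (S : Finset Ω),
      ∑ j : N, w j S = w i S + ∑ j ∈ Finset.univ.erase i, w j S := by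
    intro w S
    rw [← Finset.add_sum_erase _ _ (Finset.mem_univ i)]
  have key : ∑ j : N, vstar j (Ψstar vstar) ≥ ∑ j : N, vstar j (Ψstar v') := by
    rw [hΨ vstar]
    exact Finset.le_sup' (fun Ψ => ∑ j : N, vstar j Ψ) (Finset.mem_univ (Ψstar v'))
  rw [hsplit vstar (Ψstar vstar), hsplit vstar (Ψstar v'), hsum, hsum] at key
  have hi1 : vstar i (Ψstar vstar) = vi (Ψstar vstar) := by
    show Function.update v' i vi i _ = _; rw [Function.update_self]
  have hi2 : vstar i (Ψstar v') = vi (Ψstar v') := by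
    show Function.update v' i vi i _ = _; rw [Function.update_self]
  rw [hi1, hi2] at key
  rw [hp i vstar, hp i v', hhs, hsum]
  linarith
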